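/- Let Γ be a group and Δ ≤ Λ ≤ Γ nested subgroups. Suppose that every Δ-invariant complex-valued function of conditionally negative type on Γ is bounded on Λ. Then for every unitary representation (π, H) of Γ and every cocycle b for π that is Δ-trivial, the restriction of b to Λ is a coboundary, i.e. there exists ξ ∈ H with b(λ) = ξ − π(λ)ξ for all λ ∈ Λ. -/

import Mathlib

open scoped InnerProductSpace ComplexConjugate ComplexOrder BigOperators

section Defs

variable {Γ : Type} [Group Γ]

/-- A complex-valued function of positive type on a group. -/
def IsPosType (φ : Γ → ℂ) : Prop :=
  ∀ (n : ℕ), 1 ≤ n → ∀ (γ : Fin n → Γ) (c : Fin n → ℂ),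
    0 ≤ ∑ i, ∑ j, conj (c i) * c j * φ ((γ i)⁻¹ * γ j)

/-- A real-valued function of positive type on a group. -/
def IsRealPosType (φ : Γ → ℝ) : Prop :=
  (∀ γ : Γ, φ γ⁻¹ = φ γ) ∧
  ∀ (n : ℕ), 1 ≤ n → ∀ (γ : Fin n → Γ) (c : Fin n → ℝ),
    0 ≤ ∑ i, ∑ j, c i * c j * φ ((γ i)⁻¹ * γ j)

/-- A complex-valued function of conditionally negative type on a group. -/
def IsCondNegType (ψ : Γ → ℂ) : Prop :=
  ψ 1 = 0 ∧ (∀ γ : Γ, ψ γ⁻¹ = conj (ψ γ)) ∧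
  ∀ (n : ℕ), 2 ≤ n → ∀ (γ : Fin n → Γ) (c : Fin n → ℂ), (∑ i, c i) = 0 →
    ∑ i, ∑ j, conj (c i) * c j * ψ ((γ i)⁻¹ * γ j) ≤ 0

/-- A real-valued function of conditionally negative type on a group. -/
def IsRealCondNegType (ψ : Γ → ℝ) : Prop :=
  ψ 1 = 0 ∧ (∀ γ : Γ, ψ γ⁻¹ = ψ γ) ∧
  ∀ (n : ℕ), 2 ≤ n → ∀ (γ : Fin n → Γ) (c : Fin n → ℝ), (∑ i, c i) = 0 →
    ∑ i, ∑ j, c i * c j * ψ ((γ i)⁻¹ * γ j) ≤ 0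

/-- A function on Γ is Δ-(bi-)invariant if it is unchanged under left and right
multiplication by elements of Δ. -/
def IsInvariantUnder {α : Type*} (Δ : Subgroup Γ) (ψ : Γ → α) : Prop :=
  ∀ d₀ ∈ Δ, ∀ d₁ ∈ Δ, ∀ γ : Γ, ψ (d₀ * γ * d₁) = ψ γ

/-- The triple Δ ≤ Λ ≤ Γ has property (T): every unitary representation of Γ with
almost invariant Δ-invariant unit vectors has a Λ-invariant unit vector. -/
def HasPropertyT (Δ Λ : Subgroup Γ) : Prop :=
  ∀ (H : Type) [NormedAddCommGroup H] [InnerProductSpace ℂ H] [CompleteSpace H]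
    (π : Γ →* (H ≃ₗᵢ[ℂ] H)),
    (∀ (F : Finset Γ) (ε : ℝ), 0 < ε →
      ∃ ξ : H, ‖ξ‖ = 1 ∧ (∀ d ∈ Δ, π d ξ = ξ) ∧ ∀ γ ∈ F, ‖π γ ξ - ξ‖ ≤ ε) →
    ∃ η : H, ‖η‖ = 1 ∧ ∀ l ∈ Λ, π l η = η

end Defs

open Filter Topology

/-- Chebyshev center: a nonempty bounded subset of a Hilbert space has a unique
circumcenter, the minimizer of `x ↦ ⨆ y ∈ S, ‖x - y‖`. -/
theorem my_chebyshev {H : Type} [NormedAddCommGroup H] [InnerProductSpace ℂ H]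
    [CompleteSpace H] (S : Set H) (hne : S.Nonempty) (R : ℝ) (hR : ∀ y ∈ S, ‖y‖ ≤ R) :
    ∃ ξ : H, (∀ x : H, (⨆ y : S, ‖ξ - y.1‖) ≤ ⨆ y : S, ‖x - y.1‖) ∧
      ∀ x : H, (⨆ y : S, ‖x - y.1‖) ≤ (⨆ y : S, ‖ξ - y.1‖) → x = ξ := by
  haveI : Nonempty S := hne.to_subtype
  set r : H → ℝ := fun x => ⨆ y : S, ‖x - y.1‖ with hrdef
  have hbdd : ∀ x : H, BddAbove (Set.range fun y : S => ‖x - y.1‖) := by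
    intro x
    refine ⟨‖x‖ + R, ?_⟩
    rintro _ ⟨y, rfl⟩
    calc ‖x - y.1‖ ≤ ‖x‖ + ‖y.1‖ := norm_sub_le _ _
      _ ≤ ‖x‖ + R := by linarith [hR y.1 y.2]
  have hle : ∀ (x : H) (y : S), ‖x - y.1‖ ≤ r x := fun x y => le_ciSup (hbdd x) y
  have hr0 : ∀ x, 0 ≤ r x :=
    fun x => le_trans (norm_nonneg _) (hle x (Classical.arbitrary S))
  -- key parallelogram estimate
  have key : ∀ x x' : H, ‖x - x'‖ ^ 2 + 4 * (r ((2:ℂ)⁻¹ • (x + x'))) ^ 2 ≤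
      2 * (r x) ^ 2 + 2 * (r x') ^ 2 := by
    intro x x'
    set z : H := (2:ℂ)⁻¹ • (x + x') with hz
    have hpt : ∀ y : S, ‖z - y.1‖ ^ 2 ≤ (2 * (r x) ^ 2 + 2 * (r x') ^ 2 - ‖x - x'‖ ^ 2) / 4 := by
      intro y
      have hpar := parallelogram_law_with_norm ℂ (x - y.1) (x' - y.1)
      have h2 : (x - y.1) + (x' - y.1) = (2:ℂ) • (z - y.1) := by
        rw [hz]
        module
      have h3 : ‖(x - y.1) + (x' - y.1)‖ = 2 * ‖z - y.1‖ := by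
        rw [h2, norm_smul]
        norm_num
      have h4 : (x - y.1) - (x' - y.1) = x - x' := by abel
      rw [h3, h4] at hpar
      have hx1 := hle x y
      have hx2 := hle x' y
      have hn1 : (0:ℝ) ≤ ‖x - y.1‖ := norm_nonneg _
      have hn2 : (0:ℝ) ≤ ‖x' - y.1‖ := norm_nonneg _
      nlinarith [hpar, sq_nonneg (‖x - y.1‖ - ‖x' - y.1‖)]
    have hQ0 : 0 ≤ (2 * (r x) ^ 2 + 2 * (r x') ^ 2 - ‖x - x'‖ ^ 2) / 4 :=
      le_trans (sq_nonneg _) (hpt (Classical.arbitrary S))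
    have hrz : r z ≤ Real.sqrt ((2 * (r x) ^ 2 + 2 * (r x') ^ 2 - ‖x - x'‖ ^ 2) / 4) := by
      apply ciSup_le
      intro y
      rw [show ‖z - y.1‖ = Real.sqrt (‖z - y.1‖ ^ 2) by
        rw [Real.sqrt_sq (norm_nonneg _)]]
      exact Real.sqrt_le_sqrt (hpt y)
    have : (r z) ^ 2 ≤ (2 * (r x) ^ 2 + 2 * (r x') ^ 2 - ‖x - x'‖ ^ 2) / 4 := by
      calc (r z) ^ 2 ≤ (Real.sqrt ((2 * (r x) ^ 2 + 2 * (r x') ^ 2 - ‖x - x'‖ ^ 2) / 4)) ^ 2 := by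
            apply pow_le_pow_left₀ (hr0 z) hrz
        _ = _ := Real.sq_sqrt hQ0
    linarith
  -- the infimum of r
  have hbdd_below : BddBelow (Set.range r) := ⟨0, by rintro _ ⟨x, rfl⟩; exact hr0 x⟩
  set m : ℝ := ⨅ x : H, r x with hmdef
  have hm_le : ∀ x, m ≤ r x := fun x => ciInf_le hbdd_below x
  have hm0 : 0 ≤ m := le_ciInf hr0
  have est : ∀ x x' : H, ‖x - x'‖ ^ 2 ≤ 2 * (r x) ^ 2 + 2 * (r x') ^ 2 - 4 * m ^ 2 := by
    intro x x'
    have h1 := key x x'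
    have h2 := hm_le ((2:ℂ)⁻¹ • (x + x'))
    nlinarith [hr0 ((2:ℂ)⁻¹ • (x + x'))]
  -- minimizing sequence
  have hxn : ∀ n : ℕ, ∃ x : H, r x < m + 1 / (n + 1) := by
    intro n
    apply exists_lt_of_ciInf_lt
    have : (0:ℝ) < 1 / (n + 1) := by positivity
    linarith
  choose x hx using hxn
  have hcauchy : CauchySeq x := by
    refine cauchySeq_of_le_tendsto_0 (fun N : ℕ => Real.sqrt (8 * m / (N + 1) + 4 / (N + 1) ^ 2)) ?_ ?_
    · intro n k N hn hk
      rw [dist_eq_norm]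
      have hδn : (1:ℝ) / (n + 1) ≤ 1 / (N + 1) := by
        apply one_div_le_one_div_of_le (by positivity)
        have : (N:ℝ) ≤ n := Nat.cast_le.mpr hn
        linarith
      have hδk : (1:ℝ) / (k + 1) ≤ 1 / (N + 1) := by
        apply one_div_le_one_div_of_le (by positivity)
        have : (N:ℝ) ≤ k := Nat.cast_le.mpr hk
        linarith
      have h1 := hx n
      have h2 := hx k
      have h3 := est (x n) (x k)
      have h4 := hm_le (x n)
      have h5 := hm_le (x k)
      rw [show ‖x n - x k‖ = Real.sqrt (‖x n - x k‖ ^ 2) by rw [Real.sqrt_sq (norm_nonneg _)]]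
      apply Real.sqrt_le_sqrt
      have e1 : (0:ℝ) < 1 / (N + 1) := by positivity
      have hrn : r (x n) ≤ m + 1 / (N + 1) := by linarith
      have hrk : r (x k) ≤ m + 1 / (N + 1) := by linarith
      have hn2 : r (x n) ^ 2 ≤ (m + 1 / (N + 1)) ^ 2 := pow_le_pow_left₀ (hr0 _) hrn 2
      have hk2 : r (x k) ^ 2 ≤ (m + 1 / (N + 1)) ^ 2 := pow_le_pow_left₀ (hr0 _) hrk 2
      have e2 : 8 * m / (↑N + 1) + 4 / (↑N + 1) ^ 2 = 4 * (m + 1 / (N + 1)) ^ 2 - 4 * m ^ 2 := by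
        field_simp
        ring
      rw [e2]
      linarith
    · have h1 : Tendsto (fun N : ℕ => (1:ℝ) / (N + 1)) atTop (nhds 0) :=
        tendsto_one_div_add_atTop_nhds_zero_nat
      have h2 : Tendsto (fun N : ℕ => 8 * m / (N + 1) + 4 / (N + 1) ^ 2) atTop (nhds 0) := by
        have heq : (fun N : ℕ => 8 * m / (N + 1) + 4 / (N + 1) ^ 2) =
            fun N : ℕ => 8 * m * (1 / (N + 1)) + 4 * ((1 / (N + 1)) * (1 / (N + 1))) := by
          funext N; field_simp
        rw [heq]
        have := ((h1.const_mul (8 * m)).add ((h1.mul h1).const_mul 4))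
        simpa using this
      have := (Real.continuous_sqrt.tendsto 0).comp h2
      simpa [Function.comp_def] using this
  obtain ⟨ξ, hξ⟩ := cauchySeq_tendsto_of_complete hcauchy
  have hdist : Tendsto (fun n => ‖ξ - x n‖) atTop (nhds 0) := by
    have := (tendsto_const_nhds (x := ξ) (f := atTop (α := ℕ))).sub hξ
    simpa using this.norm
  have hrξ : r ξ ≤ m := by
    apply ciSup_le
    intro y
    have hseq : ∀ n : ℕ, ‖ξ - y.1‖ ≤ m + 1 / (n + 1) + ‖ξ - x n‖ := by
      intro n
      calc ‖ξ - y.1‖ ≤ ‖ξ - x n‖ + ‖x n - y.1‖ := by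
            have := norm_add_le (ξ - x n) (x n - y.1)
            simpa using this
        _ ≤ ‖ξ - x n‖ + r (x n) := by linarith [hle (x n) y]
        _ ≤ m + 1 / (n + 1) + ‖ξ - x n‖ := by linarith [(hx n).le]
    have hlim : Tendsto (fun n : ℕ => m + 1 / (n + 1) + ‖ξ - x n‖) atTop (nhds m) := by
      have := ((tendsto_const_nhds (x := m) (f := atTop (α := ℕ))).add
        tendsto_one_div_add_atTop_nhds_zero_nat).add hdist
      simpa using this
    exact ge_of_tendsto' hlim hseq
  refine ⟨ξ, fun x' => le_trans hrξ (hm_le x'), fun x' hx' => ?_⟩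
  have hrξm : r ξ = m := le_antisymm hrξ (hm_le ξ)
  have hrx' : r x' = m := le_antisymm (le_trans hx' hrξ) (hm_le x')
  have hest := est x' ξ
  rw [hrξm, hrx'] at hest
  have h0 : ‖x' - ξ‖ = 0 := by nlinarith [norm_nonneg (x' - ξ), sq_nonneg ‖x' - ξ‖]
  exact sub_eq_zero.mp (norm_eq_zero.mp h0)

/-- If every Δ-invariant complex-valued function of conditionally negative
type on Γ is bounded on Λ, then every Δ-trivial cocycle for a unitary representation of Γ
restricts to a coboundary on Λ. -/
theorem stmt2 (Γ : Type) [Group Γ] (Δ Λ : Subgroup Γ) (hΔΛ : Δ ≤ Λ)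
    (hbdd : ∀ ψ : Γ → ℂ, IsCondNegType ψ → IsInvariantUnder Δ ψ →
      ∃ C : ℝ, ∀ l ∈ Λ, ‖ψ l‖ ≤ C) :
    ∀ (H : Type) [NormedAddCommGroup H] [InnerProductSpace ℂ H] [CompleteSpace H]
      (π : Γ →* (H ≃ₗᵢ[ℂ] H)) (b : Γ → H),
      (∀ γ ρ : Γ, b (γ * ρ) = b γ + π γ (b ρ)) →
      (∀ d ∈ Δ, b d = 0) →
      ∃ ξ : H, ∀ l ∈ Λ, b l = ξ - π l ξ := by
  intro H _ _ _ π b hcoc htriv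
  -- basic cocycle identities
  have hb1 : b 1 = 0 := by
    have h := hcoc 1 1
    rw [one_mul, map_one] at h
    simpa using h.symm
  have hbinv : ∀ γ : Γ, b γ⁻¹ = -(π γ⁻¹ (b γ)) := by
    intro γ
    have h := hcoc γ⁻¹ γ
    rw [inv_mul_cancel, hb1] at h
    exact eq_neg_of_add_eq_zero_left h.symm
  have hdiff : ∀ γ ρ : Γ, b (γ⁻¹ * ρ) = π γ⁻¹ (b ρ - b γ) := by
    intro γ ρ
    rw [hcoc, hbinv, map_sub]
    abel
  -- the conditionally negative type function
  set ψ : Γ → ℂ := fun γ => ((‖b γ‖ ^ 2 : ℝ) : ℂ) with hψdef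
  have hcnt : IsCondNegType ψ := by
    refine ⟨by simp [hψdef, hb1], ?_, ?_⟩
    · intro γ
      have h1 : ‖b γ⁻¹‖ = ‖b γ‖ := by
        rw [hbinv, norm_neg, LinearIsometryEquiv.norm_map]
      simp only [hψdef, h1, Complex.conj_ofReal]
    · intro n hn γ c hc
      set v : Fin n → H := fun i => b (γ i) with hv
      have hψ2 : ∀ i j : Fin n, ψ ((γ i)⁻¹ * γ j)
          = ⟪v j, v j⟫_ℂ - ⟪v j, v i⟫_ℂ - ⟪v i, v j⟫_ℂ + ⟪v i, v i⟫_ℂ := by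
        intro i j
        have h2 : ‖b ((γ i)⁻¹ * γ j)‖ = ‖v j - v i‖ := by
          rw [hdiff, LinearIsometryEquiv.norm_map]
        simp only [hψdef]
        rw [h2, ← inner_sub_sub_self, inner_self_eq_norm_sq_to_K]
        norm_cast
      have hcc : (∑ i, conj (c i)) = 0 := by
        rw [← map_sum, hc, map_zero]
      have hB : ⟪∑ i, c i • v i, ∑ j, c j • v j⟫_ℂ
          = ∑ i, ∑ j, conj (c i) * c j * ⟪v i, v j⟫_ℂ := by
        rw [sum_inner]
        refine Finset.sum_congr rfl fun i _ => ?_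
        rw [inner_smul_left, inner_sum, Finset.mul_sum]
        refine Finset.sum_congr rfl fun j _ => ?_
        rw [inner_smul_right]
        ring
      have hC : ⟪∑ i, conj (c i) • v i, ∑ j, conj (c j) • v j⟫_ℂ
          = ∑ i, ∑ j, conj (c i) * c j * ⟪v j, v i⟫_ℂ := by
        calc ⟪∑ i, conj (c i) • v i, ∑ j, conj (c j) • v j⟫_ℂ
            = ∑ a, ∑ b, c a * conj (c b) * ⟪v a, v b⟫_ℂ := by
              rw [sum_inner]
              refine Finset.sum_congr rfl fun a _ => ?_
              rw [inner_smul_left, inner_sum, Finset.mul_sum]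
              refine Finset.sum_congr rfl fun b _ => ?_
              rw [inner_smul_right, Complex.conj_conj]
              ring
          _ = ∑ i, ∑ j, conj (c i) * c j * ⟪v j, v i⟫_ℂ := by
              rw [Finset.sum_comm]
              refine Finset.sum_congr rfl fun i _ => Finset.sum_congr rfl fun j _ => ?_
              ring
      have hA : ∑ i, ∑ j, conj (c i) * c j * ⟪v j, v j⟫_ℂ = 0 := by
        have : ∀ i : Fin n, ∑ j, conj (c i) * c j * ⟪v j, v j⟫_ℂ
            = conj (c i) * ∑ j, c j * ⟪v j, v j⟫_ℂ := by
          intro i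
          rw [Finset.mul_sum]
          exact Finset.sum_congr rfl fun j _ => by ring
        simp_rw [this]
        rw [← Finset.sum_mul, hcc, zero_mul]
      have hD : ∑ i, ∑ j, conj (c i) * c j * ⟪v i, v i⟫_ℂ = 0 := by
        refine Finset.sum_eq_zero fun i _ => ?_
        have : ∀ j : Fin n, conj (c i) * c j * ⟪v i, v i⟫_ℂ
            = (conj (c i) * ⟪v i, v i⟫_ℂ) * c j := fun j => by ring
        simp_rw [this]
        rw [← Finset.mul_sum, hc, mul_zero]
      have hB0 : (0:ℂ) ≤ ⟪∑ i, c i • v i, ∑ j, c j • v j⟫_ℂ := by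
        rw [inner_self_eq_norm_sq_to_K]
        exact pow_nonneg (RCLike.ofReal_nonneg.mpr (norm_nonneg _)) 2
      have hC0 : (0:ℂ) ≤ ⟪∑ i, conj (c i) • v i, ∑ j, conj (c j) • v j⟫_ℂ := by
        rw [inner_self_eq_norm_sq_to_K]
        exact pow_nonneg (RCLike.ofReal_nonneg.mpr (norm_nonneg _)) 2
      calc ∑ i, ∑ j, conj (c i) * c j * ψ ((γ i)⁻¹ * γ j)
          = ∑ i, ∑ j, (conj (c i) * c j * ⟪v j, v j⟫_ℂ - conj (c i) * c j * ⟪v j, v i⟫_ℂ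
              - conj (c i) * c j * ⟪v i, v j⟫_ℂ + conj (c i) * c j * ⟪v i, v i⟫_ℂ) := by
            refine Finset.sum_congr rfl fun i _ => Finset.sum_congr rfl fun j _ => ?_
            rw [hψ2 i j]
            ring
        _ = (∑ i, ∑ j, conj (c i) * c j * ⟪v j, v j⟫_ℂ)
            - (∑ i, ∑ j, conj (c i) * c j * ⟪v j, v i⟫_ℂ)
            - (∑ i, ∑ j, conj (c i) * c j * ⟪v i, v j⟫_ℂ)
            + (∑ i, ∑ j, conj (c i) * c j * ⟪v i, v i⟫_ℂ) := by
            simp [Finset.sum_add_distrib, Finset.sum_sub_distrib]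
        _ ≤ 0 := by
            rw [hA, hD, ← hB, ← hC]
            have h := add_nonneg hB0 hC0
            have heq : (0:ℂ) - ⟪∑ i, conj (c i) • v i, ∑ j, conj (c j) • v j⟫_ℂ
                - ⟪∑ i, c i • v i, ∑ j, c j • v j⟫_ℂ + 0
                = -(⟪∑ i, c i • v i, ∑ j, c j • v j⟫_ℂ
                  + ⟪∑ i, conj (c i) • v i, ∑ j, conj (c j) • v j⟫_ℂ) := by ring
            rw [heq]
            exact neg_nonpos.mpr h
  -- Δ-invariance
  have hinv : IsInvariantUnder Δ ψ := by
    intro d₀ hd₀ d₁ hd₁ γ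
    have h1 : b (d₀ * γ * d₁) = π d₀ (b γ) := by
      rw [hcoc (d₀ * γ) d₁, htriv d₁ hd₁, map_zero, add_zero, hcoc, htriv d₀ hd₀, zero_add]
    simp only [hψdef, h1, LinearIsometryEquiv.norm_map]
  obtain ⟨C, hC⟩ := hbdd ψ hcnt hinv
  have hC0 : 0 ≤ C := le_trans (norm_nonneg _) (hC 1 Λ.one_mem)
  have hnorm : ∀ l ∈ Λ, ‖b l‖ ≤ Real.sqrt C := by
    intro l hl
    have h1 := hC l hl
    have h2 : ‖ψ l‖ = ‖b l‖ ^ 2 := by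
      simp only [hψdef, Complex.norm_real, Real.norm_eq_abs]
      exact abs_of_nonneg (sq_nonneg _)
    rw [h2] at h1
    rw [show ‖b l‖ = Real.sqrt (‖b l‖ ^ 2) by rw [Real.sqrt_sq (norm_nonneg _)]]
    exact Real.sqrt_le_sqrt h1
  -- the orbit set
  set S : Set H := b '' (Λ : Set Γ) with hS
  have hne : S.Nonempty := ⟨b 1, 1, Λ.one_mem, rfl⟩
  have hRS : ∀ y ∈ S, ‖y‖ ≤ Real.sqrt C := by
    rintro _ ⟨l, hl, rfl⟩
    exact hnorm l hl
  obtain ⟨ξ, hmin, huniq⟩ := my_chebyshev S hne (Real.sqrt C) hRS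
  haveI : Nonempty S := hne.to_subtype
  have hbddS : ∀ x : H, BddAbove (Set.range fun y : S => ‖x - y.1‖) := by
    intro x
    refine ⟨‖x‖ + Real.sqrt C, ?_⟩
    rintro _ ⟨y, rfl⟩
    calc ‖x - y.1‖ ≤ ‖x‖ + ‖y.1‖ := norm_sub_le _ _
      _ ≤ ‖x‖ + Real.sqrt C := by linarith [hRS y.1 y.2]
  refine ⟨ξ, fun l hl => ?_⟩
  set x : H := π l ξ + b l with hxdef
  have hswap : ∀ y : S, ‖x - y.1‖ ≤ ⨆ y : S, ‖ξ - y.1‖ := by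
    rintro ⟨_, m, hm, rfl⟩
    have hmem : l⁻¹ * m ∈ Λ := mul_mem (inv_mem hl) hm
    have hbm : b m = b l + π l (b (l⁻¹ * m)) := by
      rw [← hcoc, mul_inv_cancel_left]
    have hkey : x - b m = π l (ξ - b (l⁻¹ * m)) := by
      rw [hxdef, hbm, map_sub]
      abel
    rw [hkey, LinearIsometryEquiv.norm_map]
    exact le_ciSup (hbddS ξ) (⟨b (l⁻¹ * m), l⁻¹ * m, hmem, rfl⟩ : S)
  have hxle : (⨆ y : S, ‖x - y.1‖) ≤ ⨆ y : S, ‖ξ - y.1‖ := ciSup_le hswap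
  have := huniq x hxle
  rw [hxdef] at this
  exact eq_sub_of_add_eq (by rw [add_comm]; exact this)
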